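/- A linear time-invariant system x'(t) = Ax(t) + Bu(t), with A an N×N real matrix and B an N×M real matrix, is controllable (any initial state can be driven to any final state in finite time) if and only if the controllability matrix C = [B, AB, A²B, ..., A^{N-1}B] has rank N. -/

import Mathlib

open Matrix NormedSpace

attribute [local instance] Matrix.linftyOpNormedAddCommGroup Matrix.linftyOpNormedSpace
  Matrix.linftyOpNormedRing Matrix.linftyOpNormedAlgebra

variable {N M : ℕ}

noncomputable instance matENormedAddCommMonoid : ENormedAddCommMonoid (Matrix (Fin N) (Fin N) ℝ) :=
  NormedAddCommGroup.toENormedAddCommMonoid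




noncomputable def entryCLM (i j : Fin N) : Matrix (Fin N) (Fin N) ℝ →L[ℝ] ℝ :=
  LinearMap.toContinuousLinearMap
    { toFun := fun X => X i j, map_add' := fun _ _ => rfl, map_smul' := fun _ _ => rfl }

@[simp] lemma entryCLM_apply (i j : Fin N) (X : Matrix (Fin N) (Fin N) ℝ) :
    entryCLM i j X = X i j := rfl

lemma hasDerivAt_exp_entry (A : Matrix (Fin N) (Fin N) ℝ) (i j : Fin N) (t : ℝ) :
    HasDerivAt (fun t : ℝ => exp (t • A) i j) ((exp (t • A) * A) i j) t :=
  (entryCLM i j).hasFDerivAt.comp_hasDerivAt t (hasDerivAt_exp_smul_const (𝕂 := ℝ) A t)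

lemma continuous_exp_entry (A : Matrix (Fin N) (Fin N) ℝ) (i j : Fin N) :
    Continuous (fun t : ℝ => exp (t • A) i j) :=
  (entryCLM i j).continuous.comp (exp_continuous.comp (by continuity))

/-- derivative of `t ↦ exp(tA) ⬝ y t` -/
lemma hasDerivAt_exp_mulVec (A : Matrix (Fin N) (Fin N) ℝ) {y : ℝ → Fin N → ℝ}
    {y' : Fin N → ℝ} {t : ℝ} (hy : HasDerivAt y y' t) :
    HasDerivAt (fun s : ℝ => (exp (s • A)).mulVec (y s))
      ((exp (t • A) * A).mulVec (y t) + (exp (t • A)).mulVec y') t := by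
  rw [hasDerivAt_pi]
  intro i
  have hcomp : ∀ j : Fin N, HasDerivAt (fun s => y s j) (y' j) t := fun j =>
    (ContinuousLinearMap.proj (R := ℝ) (φ := fun _ : Fin N => ℝ) j).hasFDerivAt.comp_hasDerivAt t hy
  have : ∀ s : ℝ, (exp (s • A)).mulVec (y s) i = ∑ j, exp (s • A) i j * y s j := by
    intro s; simp [Matrix.mulVec, dotProduct]
  simp only [this]
  have hsum : HasDerivAt (fun s => ∑ j, exp (s • A) i j * y s j)
      (∑ j, ((exp (t • A) * A) i j * y t j + exp (t • A) i j * y' j)) t :=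
    HasDerivAt.fun_sum fun j _ => (hasDerivAt_exp_entry A i j t).mul (hcomp j)
  refine hsum.congr_deriv ?_
  simp [Matrix.mulVec, dotProduct, Finset.sum_add_distrib]




/-- `X ↦ v ᵥ* (X * B)` as a continuous linear map. -/
noncomputable def vXB (v : Fin N → ℝ) (B : Matrix (Fin N) (Fin M) ℝ) :
    Matrix (Fin N) (Fin N) ℝ →L[ℝ] (Fin M → ℝ) :=
  LinearMap.toContinuousLinearMap
    { toFun := fun X => v ᵥ* (X * B)
      map_add' := fun X Y => by
        show v ᵥ* ((X + Y) * B) = _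
        rw [Matrix.add_mul, Matrix.vecMul_add]
      map_smul' := fun c X => by
        show v ᵥ* ((c • X) * B) = _
        rw [Matrix.smul_mul]
        funext j
        simp [Matrix.vecMul, dotProduct, Finset.mul_sum, mul_left_comm] }

@[simp] lemma vXB_apply (v : Fin N → ℝ) (B : Matrix (Fin N) (Fin M) ℝ)
    (X : Matrix (Fin N) (Fin N) ℝ) : vXB v B X = v ᵥ* (X * B) := rfl

/-- Cayley–Hamilton extension -/
lemma kills_all_powers (A : Matrix (Fin N) (Fin N) ℝ) (B : Matrix (Fin N) (Fin M) ℝ)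
    (v : Fin N → ℝ) (h : ∀ k < N, v ᵥ* (A ^ k * B) = 0) :
    ∀ k, v ᵥ* (A ^ k * B) = 0 := by
  rcases Nat.eq_zero_or_pos N with hN | hN
  · intro k; subst hN
    funext j; simp [Matrix.vecMul, dotProduct]
  have hCH : A ^ N = -∑ i ∈ Finset.range N, A.charpoly.coeff i • A ^ i := by
    have h0 := A.aeval_self_charpoly
    rw [Polynomial.aeval_eq_sum_range] at h0
    rw [A.charpoly_natDegree_eq_dim, Fintype.card_fin, Finset.sum_range_succ] at h0
    have hmon : A.charpoly.coeff A.charpoly.natDegree = 1 := A.charpoly_monic.coeff_natDegree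
    rw [A.charpoly_natDegree_eq_dim, Fintype.card_fin] at hmon
    rw [hmon, one_smul] at h0
    exact eq_neg_of_add_eq_zero_right h0
  intro k
  induction k using Nat.strong_induction_on with
  | _ k ih =>
    by_cases hk : k < N
    · exact h k hk
    push_neg at hk
    have hke : A ^ k = -∑ i ∈ Finset.range N, A.charpoly.coeff i • A ^ (k - N + i) := by
      have : A ^ k = A ^ (k - N) * A ^ N := by
        rw [← pow_add, Nat.sub_add_cancel hk]
      rw [this, hCH, Matrix.mul_neg, Finset.mul_sum]
      congr 1
      refine Finset.sum_congr rfl fun i _ => ?_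
      rw [Matrix.mul_smul, ← pow_add]
    have : v ᵥ* (A ^ k * B) = vXB v B (A ^ k) := rfl
    rw [this, hke, map_neg, map_sum]
    rw [neg_eq_zero]
    refine Finset.sum_eq_zero fun i hi => ?_
    rw [_root_.map_smul]
    have : vXB v B (A ^ (k - N + i)) = 0 := by
      have := ih (k - N + i) (by
        have : i < N := Finset.mem_range.mp hi
        omega)
      simpa using this
    rw [this, smul_zero]

/-- series annihilation -/
lemma kills_exp (A : Matrix (Fin N) (Fin N) ℝ) (B : Matrix (Fin N) (Fin M) ℝ)
    (v : Fin N → ℝ) (h : ∀ k, v ᵥ* (A ^ k * B) = 0) (t : ℝ) :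
    v ᵥ* (exp (t • A) * B) = 0 := by
  have : v ᵥ* (exp (t • A) * B) = vXB v B (exp (t • A)) := rfl
  rw [this, exp_eq_tsum ℝ]
  beta_reduce
  have hs := (vXB v B).hasSum (expSeries_summable' (𝕂 := ℝ) (t • A)).hasSum
  have hz : ∀ n : ℕ, vXB v B (((Nat.factorial n : ℝ))⁻¹ • (t • A) ^ n) = 0 := fun n => by
    rw [_root_.map_smul, smul_pow, _root_.map_smul, vXB_apply, h n, smul_zero, smul_zero]
  exact hs.unique (by simpa only [hz] using hasSum_zero)



lemma rank_eq_iff_vecMul {K : Type*} [Fintype K] (C : Matrix (Fin N) K ℝ) :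
    C.rank = N ↔ ∀ v : Fin N → ℝ, v ᵥ* C = 0 → v = 0 := by
  have h1 : C.rank = N ↔ LinearIndependent ℝ (fun i => C i) := by
    rw [rank_eq_finrank_span_row, linearIndependent_iff_card_eq_finrank_span, Fintype.card_fin,
      Set.finrank]
    exact comm
  rw [h1, show (fun i => C i) = C.row from rfl, ← Matrix.vecMul_injective_iff, ← Matrix.coe_vecMulLinear,
    injective_iff_map_eq_zero]
  simp only [Matrix.vecMulLinear_apply]

lemma vecMul_ctrb_eq_zero_iff (A : Matrix (Fin N) (Fin N) ℝ) (B : Matrix (Fin N) (Fin M) ℝ)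
    (v : Fin N → ℝ) :
    v ᵥ* (Matrix.of fun (i : Fin N) (p : Fin N × Fin M) => (A ^ (p.1 : ℕ) * B) i p.2) = 0 ↔
      ∀ k < N, v ᵥ* (A ^ k * B) = 0 := by
  constructor
  · intro h k hk
    funext j
    have := congrFun h (⟨k, hk⟩, j)
    simpa [Matrix.vecMul, dotProduct] using this
  · intro h
    funext p
    have := congrFun (h p.1 p.1.isLt) p.2
    simpa [Matrix.vecMul, dotProduct] using this

noncomputable def dotCLM (v : Fin N → ℝ) : (Fin N → ℝ) →L[ℝ] ℝ :=
  LinearMap.toContinuousLinearMap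
    { toFun := fun w => v ⬝ᵥ w
      map_add' := fun _ _ => by simp [dotProduct_add]
      map_smul' := fun _ _ => by simp [dotProduct_smul] }

@[simp] lemma dotCLM_apply (v w : Fin N → ℝ) : dotCLM v w = v ⬝ᵥ w := rfl

lemma controllable_implies_rank (A : Matrix (Fin N) (Fin N) ℝ) (B : Matrix (Fin N) (Fin M) ℝ)
    (hc : ∀ x₀ x₁ : Fin N → ℝ, ∃ T : ℝ, 0 < T ∧
      ∃ u : ℝ → Fin M → ℝ, Continuous u ∧
        ∃ x : ℝ → Fin N → ℝ,
          (∀ t : ℝ, HasDerivAt x (A.mulVec (x t) + B.mulVec (u t)) t) ∧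
          x 0 = x₀ ∧ x T = x₁)
    (v : Fin N → ℝ)
    (hv : ∀ k < N, v ᵥ* (A ^ k * B) = 0) : v = 0 := by
  have hall := kills_all_powers A B v hv
  have hexp : ∀ t : ℝ, v ᵥ* (exp (t • (-A)) * B) = 0 := by
    intro t
    have hrw : t • (-A) = (-t) • A := by rw [smul_neg, neg_smul]
    rw [hrw]
    exact kills_exp A B v hall (-t)
  obtain ⟨T, hT, u, hu, x, hx, hx0, hxT⟩ := hc v 0
  set h : ℝ → ℝ := fun t => v ⬝ᵥ (exp (t • (-A))).mulVec (x t) with hh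
  have hd : ∀ t, HasDerivAt h 0 t := by
    intro t
    have hz := hasDerivAt_exp_mulVec (-A) (hx t)
    have hcomp := (dotCLM v).hasFDerivAt.comp_hasDerivAt t hz
    refine hcomp.congr_deriv ?_
    have key : (exp (t • (-A)) * (-A)).mulVec (x t)
        + (exp (t • (-A))).mulVec (A.mulVec (x t) + B.mulVec (u t))
        = (exp (t • (-A)) * B).mulVec (u t) := by
      rw [← Matrix.mulVec_mulVec, ← Matrix.mulVec_add, Matrix.neg_mulVec,
        neg_add_cancel_left, Matrix.mulVec_mulVec]
    rw [dotCLM_apply, key, dotProduct_mulVec, hexp t, zero_dotProduct]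
  have hconst := is_const_of_deriv_eq_zero (𝕜 := ℝ)
    (fun t => (hd t).differentiableAt) (fun t => (hd t).deriv) 0 T
  have h0 : h 0 = v ⬝ᵥ v := by
    simp [hh, hx0]
  have hTv : h T = 0 := by
    simp [hh, hxT]
  rw [h0, hTv] at hconst
  exact dotProduct_self_eq_zero.mp hconst

/-- `X ↦ X *ᵥ z` as a CLM. -/
noncomputable def mulVecCLM (z : Fin N → ℝ) : Matrix (Fin N) (Fin N) ℝ →L[ℝ] (Fin N → ℝ) :=
  LinearMap.toContinuousLinearMap
    { toFun := fun X => X *ᵥ z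
      map_add' := fun X Y => Matrix.add_mulVec X Y z
      map_smul' := fun c X => by simp [Matrix.smul_mulVec] }

@[simp] lemma mulVecCLM_apply (z : Fin N → ℝ) (X : Matrix (Fin N) (Fin N) ℝ) :
    mulVecCLM z X = X *ᵥ z := rfl

lemma rank_implies_controllable (A : Matrix (Fin N) (Fin N) ℝ) (B : Matrix (Fin N) (Fin M) ℝ)
    (hR : ∀ v : Fin N → ℝ, (∀ k < N, v ᵥ* (A ^ k * B) = 0) → v = 0)
    (x₀ x₁ : Fin N → ℝ) :
    ∃ T : ℝ, 0 < T ∧ ∃ u : ℝ → Fin M → ℝ, Continuous u ∧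
      ∃ x : ℝ → Fin N → ℝ,
        (∀ t : ℝ, HasDerivAt x (A.mulVec (x t) + B.mulVec (u t)) t) ∧
        x 0 = x₀ ∧ x 1 = x₁ := by
  classical
  set E : ℝ → Matrix (Fin N) (Fin N) ℝ := fun s => exp (s • (-A)) with hE
  set P : ℝ → Matrix (Fin N) (Fin M) ℝ := fun s => E s * B with hP
  set G : ℝ → Matrix (Fin N) (Fin N) ℝ := fun s => P s * (P s)ᵀ with hG
  have hEc : Continuous E := exp_continuous.comp (continuous_id.smul continuous_const)
  have hPc : Continuous P := hEc.matrix_mul continuous_const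
  have hGc : Continuous G := hPc.matrix_mul hPc.matrix_transpose
  have hGint : ∀ a b : ℝ, IntervalIntegrable G MeasureTheory.volume a b := fun a b =>
    hGc.intervalIntegrable a b
  set W : Matrix (Fin N) (Fin N) ℝ := ∫ s in (0:ℝ)..1, G s with hW
  -- the kernel of the Gramian is trivial
  have hker : ∀ v : Fin N → ℝ, W *ᵥ v = 0 → v = 0 := by
    intro v hWv
    set f : ℕ → ℝ → Fin M → ℝ := fun k s => v ᵥ* (E s * (A ^ k * B)) with hf
    set q : ℝ → ℝ := fun s => f 0 s ⬝ᵥ f 0 s with hq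
    have hfc : ∀ k, Continuous (f k) := fun k =>
      ((vXB v (A ^ k * B)).continuous.comp hEc : _)
    have hq0 : ∀ s, 0 ≤ q s := by
      intro s
      rw [hq]
      simp only [dotProduct]
      exact Finset.sum_nonneg fun p _ => mul_self_nonneg _
    have hqc : Continuous q := (hfc 0).dotProduct (hfc 0)
    have hqG : ∀ s, q s = v ⬝ᵥ (G s *ᵥ v) := by
      intro s
      rw [hq]
      have h1 : G s *ᵥ v = P s *ᵥ ((P s)ᵀ *ᵥ v) := by rw [Matrix.mulVec_mulVec, hG]
      rw [h1, dotProduct_mulVec, Matrix.mulVec_transpose]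
      have h2 : f 0 s = v ᵥ* P s := by simp [hf, hP]
      show f 0 s ⬝ᵥ f 0 s = _
      rw [h2]
    have hint : ∫ s in (0:ℝ)..1, q s = 0 := by
      have h1 : v ⬝ᵥ (W *ᵥ v) = 0 := by rw [hWv, dotProduct_zero]
      have h2 : ((dotCLM v).comp (mulVecCLM v)) W
          = ∫ s in (0:ℝ)..1, ((dotCLM v).comp (mulVecCLM v)) (G s) :=
        (ContinuousLinearMap.intervalIntegral_comp_comm _ (hGint 0 1)).symm
      have h3 : ∀ s, ((dotCLM v).comp (mulVecCLM v)) (G s) = q s := fun s => (hqG s).symm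
      simp only [h3] at h2
      rw [← h2]
      simpa using h1
    -- the integral of the nonneg continuous `q` over `[0,1]` vanishes, so `q = 0` on `(0,1)`
    set F : ℝ → ℝ := fun t => ∫ s in (0:ℝ)..t, q s with hF
    have hqint : ∀ a b : ℝ, IntervalIntegrable q MeasureTheory.volume a b := fun a b =>
      hqc.intervalIntegrable a b
    have hF0 : ∀ t ∈ Set.Icc (0:ℝ) 1, F t = 0 := by
      intro t ht
      have h1 : 0 ≤ F t := intervalIntegral.integral_nonneg ht.1 fun s _ => hq0 s
      have h2 : 0 ≤ ∫ s in t..1, q s := intervalIntegral.integral_nonneg ht.2 fun s _ => hq0 s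
      have h3 : F t + ∫ s in t..1, q s = 0 := by
        rw [hF]
        rw [intervalIntegral.integral_add_adjacent_intervals (hqint 0 t) (hqint t 1)]
        exact hint
      linarith
    have hqz : ∀ s ∈ Set.Ioo (0:ℝ) 1, q s = 0 := by
      intro s hs
      have hFd : HasDerivAt F (q s) s := (hqc.integral_hasStrictDerivAt 0 s).hasDerivAt
      have hev : F =ᶠ[nhds s] fun _ => 0 :=
        Filter.eventually_of_mem (Ioo_mem_nhds hs.1 hs.2) fun t ht =>
          hF0 t (Set.Ioo_subset_Icc_self ht)
      have hFd0 : HasDerivAt F 0 s := (hasDerivAt_const s (0:ℝ)).congr_of_eventuallyEq hev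
      exact hFd.unique hFd0
    have hf0 : ∀ s ∈ Set.Ioo (0:ℝ) 1, f 0 s = 0 := fun s hs =>
      dotProduct_self_eq_zero.mp (hqz s hs)
    -- propagate to all powers by differentiating
    have hfk : ∀ k, ∀ s ∈ Set.Ioo (0:ℝ) 1, f k s = 0 := by
      intro k
      induction k with
      | zero => exact hf0
      | succ k ih =>
        intro s hs
        have hder : HasDerivAt (f k) (-(f (k + 1) s)) s := by
          have h1 := hasDerivAt_exp_smul_const (𝕂 := ℝ) (-A) s
          have h2 := (vXB v (A ^ k * B)).hasFDerivAt.comp_hasDerivAt s h1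
          have h3 : vXB v (A ^ k * B) (exp (s • (-A)) * (-A)) = -(f (k + 1) s) := by
            rw [vXB_apply, hf]
            have : exp (s • (-A)) * (-A) * (A ^ k * B) = -(E s * (A ^ (k + 1) * B)) := by
              rw [hE]
              simp only [Matrix.neg_mul, Matrix.mul_neg]
              rw [Matrix.mul_assoc, ← Matrix.mul_assoc A (A ^ k) B, ← pow_succ']
            rw [this, Matrix.vecMul_neg]
          rw [← h3]
          exact h2
        have hev : f k =ᶠ[nhds s] fun _ => 0 :=
          Filter.eventually_of_mem (Ioo_mem_nhds hs.1 hs.2) fun t ht => ih t ht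
        have hder0 : HasDerivAt (f k) 0 s :=
          (hasDerivAt_const s (0 : Fin M → ℝ)).congr_of_eventuallyEq hev
        have := hder.unique hder0
        rwa [neg_eq_zero] at this
    -- conclude `v = 0`
    set w : Fin N → ℝ := v ᵥ* E (1/2) with hw
    have hwk : ∀ k < N, w ᵥ* (A ^ k * B) = 0 := by
      intro k _
      rw [hw, Matrix.vecMul_vecMul]
      exact hfk k (1/2) (by norm_num)
    have hw0 : w = 0 := hR w hwk
    have hEinv : E (1/2) * exp ((1/2 : ℝ) • A) = 1 := by
      simp only [hE]
      rw [← Matrix.exp_add_of_commute]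
      · rw [smul_neg, neg_add_cancel, exp_zero]
      · exact (Commute.refl _).neg_left.smul_left _ |>.smul_right _
    calc v = v ᵥ* 1 := (Matrix.vecMul_one v).symm
      _ = v ᵥ* (E (1/2) * exp ((1/2 : ℝ) • A)) := by rw [hEinv]
      _ = w ᵥ* exp ((1/2 : ℝ) • A) := by rw [hw, Matrix.vecMul_vecMul]
      _ = 0 := by rw [hw0, Matrix.zero_vecMul]
  -- the Gramian is invertible
  have hdet : IsUnit W.det := by
    rw [isUnit_iff_ne_zero]
    intro hdet0
    obtain ⟨v, hv1, hv2⟩ := (Matrix.exists_mulVec_eq_zero_iff).mpr hdet0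
    exact hv1 (hker v hv2)
  have hWWi : W * W⁻¹ = 1 := Matrix.mul_nonsing_inv W hdet
  -- construct the control
  set c : Fin N → ℝ := E 1 *ᵥ x₁ - x₀ with hc
  set z : Fin N → ℝ := W⁻¹ *ᵥ c with hz
  set u : ℝ → Fin M → ℝ := fun s => (P s)ᵀ *ᵥ z with hu
  have huc : Continuous u := hPc.matrix_transpose.matrix_mulVec continuous_const
  set Fc : ℝ → Fin N → ℝ := fun s => P s *ᵥ u s with hFc
  have hFcc : Continuous Fc := hPc.matrix_mulVec huc
  set y : ℝ → Fin N → ℝ := fun t => ∫ s in (0:ℝ)..t, Fc s with hy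
  set x : ℝ → Fin N → ℝ := fun t => exp (t • A) *ᵥ (x₀ + y t) with hx
  have hyd : ∀ t, HasDerivAt y (Fc t) t := fun t =>
    (hFcc.integral_hasStrictDerivAt 0 t).hasDerivAt
  have hcomm : ∀ t : ℝ, exp (t • A) * A = A * exp (t • A) := fun t =>
    (((Commute.refl A).smul_left t).exp_left).eq
  have hEE : ∀ t : ℝ, exp (t • A) * E t = 1 := by
    intro t
    simp only [hE]
    rw [← Matrix.exp_add_of_commute]
    · rw [smul_neg, add_neg_cancel, exp_zero]
    · exact (Commute.refl _).neg_right.smul_left _ |>.smul_right _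
  refine ⟨1, one_pos, u, huc, x, ?_, ?_, ?_⟩
  · intro t
    have h1 : HasDerivAt (fun t => x₀ + y t) (Fc t) t := (hyd t).const_add x₀
    have h2 := hasDerivAt_exp_mulVec A h1
    convert h2 using 1
    rw [hx]
    have e1 : (exp (t • A) * A) *ᵥ (x₀ + y t) = A *ᵥ (exp (t • A) *ᵥ (x₀ + y t)) := by
      rw [Matrix.mulVec_mulVec, hcomm]
    have e2 : exp (t • A) *ᵥ Fc t = B *ᵥ u t := by
      rw [hFc, hP]
      simp only [Matrix.mulVec_mulVec]
      rw [← Matrix.mul_assoc, hEE, Matrix.one_mul]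
    rw [e1, e2]
  · show exp ((0:ℝ) • A) *ᵥ (x₀ + y 0) = x₀
    have : y 0 = 0 := intervalIntegral.integral_same
    rw [this, add_zero, zero_smul, exp_zero, Matrix.one_mulVec]
  · have hy1 : y 1 = c := by
      have h2 : (mulVecCLM z) W = ∫ s in (0:ℝ)..1, (mulVecCLM z) (G s) :=
        (ContinuousLinearMap.intervalIntegral_comp_comm _ (hGint 0 1)).symm
      have h3 : ∀ s, (mulVecCLM z) (G s) = Fc s := by
        intro s
        rw [mulVecCLM_apply, hG, hFc, hu, ← Matrix.mulVec_mulVec]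
      simp only [h3] at h2
      show (∫ s in (0:ℝ)..1, Fc s) = c
      rw [← h2, mulVecCLM_apply, hz, Matrix.mulVec_mulVec, hWWi, Matrix.one_mulVec]
    show exp ((1:ℝ) • A) *ᵥ (x₀ + y 1) = x₁
    simp only [hy1, hc]
    rw [add_sub_cancel, Matrix.mulVec_mulVec, hEE 1, Matrix.one_mulVec]

/-- Kalman's rank condition: the LTI system `x' = Ax + Bu` is controllable
(any initial state can be driven to any final state in finite time)
iff the controllability matrix `[B, AB, ..., A^{N-1}B]` has rank `N`. -/
theorem kalman_rank_condition (N M : ℕ)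
    (A : Matrix (Fin N) (Fin N) ℝ) (B : Matrix (Fin N) (Fin M) ℝ) :
    (∀ x₀ x₁ : Fin N → ℝ, ∃ T : ℝ, 0 < T ∧
      ∃ u : ℝ → Fin M → ℝ, Continuous u ∧
        ∃ x : ℝ → Fin N → ℝ,
          (∀ t : ℝ, HasDerivAt x (A.mulVec (x t) + B.mulVec (u t)) t) ∧
          x 0 = x₀ ∧ x T = x₁) ↔
    (Matrix.of fun (i : Fin N) (p : Fin N × Fin M) =>
        (A ^ (p.1 : ℕ) * B) i p.2).rank = N := by
  constructor
  · intro hc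
    rw [rank_eq_iff_vecMul]
    intro v hv
    exact controllable_implies_rank A B hc v ((vecMul_ctrb_eq_zero_iff A B v).mp hv)
  · intro hrank x₀ x₁
    have hR : ∀ v : Fin N → ℝ, (∀ k < N, v ᵥ* (A ^ k * B) = 0) → v = 0 := fun v hv =>
      (rank_eq_iff_vecMul _).mp hrank v ((vecMul_ctrb_eq_zero_iff A B v).mpr hv)
    obtain ⟨T, hT, u, hu, x, hx, h0, h1⟩ := rank_implies_controllable A B hR x₀ x₁
    exact ⟨1, one_pos, u, hu, x, hx, h0, h1⟩
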